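/- Let $\mathcal{C}$ be an abelian category with enough injectives and $X$ an exact, locally nilpotent endofunctor preserving injectives. If $\mathsf{M} \in \operatorname{Mono}(X)$ and the underlying object $M = f^*(\mathsf{M})$ is injective in $\mathcal{C}$, then $\mathsf{M} \cong f_!(J)$ for some injective object $J$ of $\mathcal{C}$. -/

import Mathlib

open CategoryTheory Limits

universe v u

variable {C : Type u} [Category.{v} C]

/-- The power `X^n` of an endofunctor, with `X^(n+1) = X^n ⋙ X`. -/
def fpow (X : C ⥤ C) : ℕ → (C ⥤ C)
  | 0 => 𝟭 C
  | n + 1 => fpow X n ⋙ X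

/-- `X` is locally nilpotent if every object is annihilated by some power of `X`. -/
def LocallyNilpotent (X : C ⥤ C) : Prop :=
  ∀ M : C, ∃ n : ℕ, IsZero ((fpow X n).obj M)

/-- The category `(X ⇓ Id)` of `X`-modules, identified with the Eilenberg–Moore category
of the free monad on `X`. -/
structure XMod (X : C ⥤ C) : Type max u v where
  carrier : C
  str : X.obj carrier ⟶ carrier

/-- Morphisms of `X`-modules. -/
@[ext]
structure XModHom {X : C ⥤ C} (M N : XMod X) : Type v where
  hom : M.carrier ⟶ N.carrier
  comm : M.str ≫ hom = X.map hom ≫ N.str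

instance (X : C ⥤ C) : Category (XMod X) where
  Hom := XModHom
  id M := ⟨𝟙 M.carrier, by simp⟩
  comp f g := ⟨f.hom ≫ g.hom, by
    rw [← Category.assoc, f.comm, Category.assoc, g.comm, ← Category.assoc, ← Functor.map_comp]⟩
  id_comp f := by apply XModHom.ext; simp [CategoryStruct.id, CategoryStruct.comp]
  comp_id f := by apply XModHom.ext; simp [CategoryStruct.id, CategoryStruct.comp]
  assoc f g h := by apply XModHom.ext; simp [CategoryStruct.comp]

@[simp] lemma XMod.id_hom {X : C ⥤ C} (M : XMod X) : (𝟙 M : XModHom M M).hom = 𝟙 M.carrier := rfl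
@[simp] lemma XMod.comp_hom {X : C ⥤ C} {M N P : XMod X} (f : M ⟶ N) (g : N ⟶ P) :
    (f ≫ g).hom = f.hom ≫ g.hom := rfl

/-- `F` is the free `X`-module `f₁(N)` on `N`, encoded via the universal
property of the free–forgetful adjunction `f₁ ⊣ f⋆`. -/
structure IsFreeXModOn (X : C ⥤ C) (F : XMod X) (N : C) where
  unit : N ⟶ F.carrier
  lift : ∀ (P : XMod X), (N ⟶ P.carrier) → (F ⟶ P)
  fac : ∀ (P : XMod X) (g : N ⟶ P.carrier), unit ≫ (lift P g).hom = g
  uniq : ∀ (P : XMod X) (g : N ⟶ P.carrier) (k : F ⟶ P), unit ≫ k.hom = g → k = lift P g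

/-- Iterated "section" maps `M ⟶ Xⁿ M` built from `r : M ⟶ X M`. -/
def Sseq {X : C ⥤ C} {M : C} (r : M ⟶ X.obj M) : ∀ n : ℕ, M ⟶ (fpow X n).obj M
  | 0 => 𝟙 M
  | n + 1 => r ≫ X.map (Sseq r n)

/-- Iterated structure maps `Xⁿ P ⟶ P` built from `p : X P ⟶ P`. -/
def Tseq {X : C ⥤ C} {P : C} (p : X.obj P ⟶ P) : ∀ n : ℕ, (fpow X n).obj P ⟶ P
  | 0 => 𝟙 P
  | n + 1 => X.map (Tseq p n) ≫ p

lemma seq_factor {X : C ⥤ C} {M P : C} (r : M ⟶ X.obj M) (p : X.obj P ⟶ P)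
    (d : ℕ → (M ⟶ P)) (hstep : ∀ n, d (n + 1) = r ≫ X.map (d n) ≫ p) :
    ∀ n, d n = Sseq r n ≫ (fpow X n).map (d 0) ≫ Tseq p n
  | 0 => by simp [Sseq, Tseq, fpow]
  | n + 1 => by
    rw [hstep n, seq_factor r p d hstep n]
    show _ = (r ≫ X.map (Sseq r n)) ≫ X.map ((fpow X n).map (d 0)) ≫ (X.map (Tseq p n) ≫ p)
    simp [Functor.map_comp]

/-- Let `C` be abelian with enough injectives and `X` exact, locally
nilpotent and preserving injectives. If `M ∈ Mono(X)` has injective underlying object,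
then `M` is (isomorphic to) a free module `f₁(J)` on an injective object `J`. -/
theorem monoX_with_injective_underlying_is_free
    [Abelian C] [EnoughInjectives C] {X : C ⥤ C}
    [PreservesFiniteLimits X] [PreservesFiniteColimits X]
    (hX : LocallyNilpotent X)
    (hXinj : ∀ I : C, Injective I → Injective (X.obj I))
    (M : XMod X) (hM : Mono M.str) (hMinj : Injective M.carrier) :
    ∃ J : C, Injective J ∧ Nonempty (IsFreeXModOn X M J) := by
  haveI := preservesBinaryBiproducts_of_preservesBinaryProducts X
  haveI : X.Additive := Functor.additive_of_preservesBinaryBiproducts X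
  -- split the (mono) structure map using injectivity of `X M`
  haveI := hXinj M.carrier hMinj
  obtain ⟨r, hr⟩ := Injective.factors (𝟙 (X.obj M.carrier)) M.str
  -- `J` is the complement of `X M` in `M`
  set J := kernel r with hJ
  set ι : J ⟶ M.carrier := kernel.ι r with hι
  have hιr : ι ≫ r = 0 := kernel.condition r
  have hq0 : (𝟙 M.carrier - r ≫ M.str) ≫ r = 0 := by
    simp [Preadditive.sub_comp, Category.assoc, hr]
  set q : M.carrier ⟶ J := kernel.lift r (𝟙 M.carrier - r ≫ M.str) hq0 with hq
  have hqι : q ≫ ι = 𝟙 M.carrier - r ≫ M.str := kernel.lift_ι _ _ _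
  have hιq : ι ≫ q = 𝟙 J := by
    rw [← cancel_mono ι, Category.assoc, hqι]
    simp [Preadditive.comp_sub, reassoc_of% hιr, hιr]
  have hhq : M.str ≫ q = 0 := by
    rw [← cancel_mono ι, Category.assoc, hqι]
    simp [Preadditive.comp_sub, reassoc_of% hr, hr]
  -- `J` is injective as a retract of `M`
  have hJinj : Injective J := by
    constructor
    intro A B g f hf
    obtain ⟨l, hl⟩ := Injective.factors (g ≫ ι) f
    exact ⟨l ≫ q, by rw [← Category.assoc, hl, Category.assoc, hιq, Category.comp_id]⟩
  obtain ⟨N, hN⟩ := hX M.carrier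
  -- existence and uniqueness of module maps out of `M`
  have exuniq : ∀ (P : XMod X) (g : J ⟶ P.carrier),
      ∃! k : M ⟶ P, ι ≫ k.hom = g := by
    intro P g
    -- iterate the fixed-point operator
    set kseq : ℕ → (M.carrier ⟶ P.carrier) :=
      fun n => Nat.rec 0 (fun _ k => r ≫ X.map k ≫ P.str + q ≫ g) n with hkseq
    have hstep : ∀ n, kseq (n + 1) = r ≫ X.map (kseq n) ≫ P.str + q ≫ g := fun n => rfl
    set δ : ℕ → (M.carrier ⟶ P.carrier) := fun n => kseq (n + 1) - kseq n with hδ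
    have hδstep : ∀ n, δ (n + 1) = r ≫ X.map (δ n) ≫ P.str := by
      intro n
      simp only [hδ, hstep, Functor.map_sub, Preadditive.sub_comp, Preadditive.comp_sub]
      abel
    have hδN : δ N = 0 := by
      rw [seq_factor r P.str δ hδstep N, hN.eq_of_src ((fpow X N).map (δ 0)) 0]
      simp
    have hfix : kseq N = r ≫ X.map (kseq N) ≫ P.str + q ≫ g := by
      have h2 : kseq (N + 1) = kseq N := sub_eq_zero.mp (by simpa [hδ] using hδN)
      rw [← hstep N]; exact h2.symm
    set K := kseq N with hK
    have hcomm : M.str ≫ K = X.map K ≫ P.str := by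
      conv_lhs => rw [hfix]
      simp [Preadditive.comp_add, reassoc_of% hr, reassoc_of% hhq]
    have hfac : ι ≫ K = g := by
      conv_lhs => rw [hfix]
      simp [Preadditive.comp_add, reassoc_of% hιr, reassoc_of% hιq]
    refine ⟨⟨K, hcomm⟩, hfac, ?_⟩
    rintro ⟨k, hk⟩ hk'
    have hk'' : ι ≫ k = g := hk'
    have hid : r ≫ M.str + q ≫ ι = 𝟙 M.carrier := by rw [hqι]; abel
    have hkfix : k = r ≫ X.map k ≫ P.str + q ≫ g := by
      conv_lhs => rw [← Category.id_comp k, ← hid]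
      rw [Preadditive.add_comp, Category.assoc, Category.assoc, hk, hk'']
    have hd : ∀ n : ℕ, (fun _ : ℕ => k - K) (n + 1) = r ≫ X.map ((fun _ : ℕ => k - K) n) ≫ P.str := by
      intro n
      simp only
      conv_lhs => rw [hkfix]
      conv_lhs => rw [hfix]
      simp only [Functor.map_sub, Preadditive.sub_comp, Preadditive.comp_sub]
      abel
    have hzero : k - K = 0 := by
      have := seq_factor r P.str (fun _ => k - K) hd N
      rw [this, hN.eq_of_src ((fpow X N).map (k - K)) 0]
      simp
    apply XModHom.ext
    simpa [sub_eq_zero] using hzero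
  refine ⟨J, hJinj, ⟨⟨ι, fun P g => (exuniq P g).exists.choose,
    fun P g => (exuniq P g).exists.choose_spec, fun P g k hk => ?_⟩⟩⟩
  exact (exuniq P g).unique hk (exuniq P g).exists.choose_spec
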